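/- arXiv:2502.14733 — 2 statements merged into one kernel-verified Lean document; each statement's English description precedes it below -/
import Mathlib

section
/- If K₁, ..., Kₙ is a finite family of pairwise disjoint convex bodies in ℝ^d (d ≥ 2), then the intersection ⋂ᵢ (complement of int Kᵢ) is orthogonally connected. -/
open Set MeasureTheory Bornology
open scoped ENNReal

noncomputable section

/-- `ℝ^d` as Euclidean space. -/
abbrev EucR (d : ℕ) := EuclideanSpace ℝ (Fin d)

/-- The segment from `x` to `y` is parallel to a coordinate axis
(all coordinates except possibly one agree). -/
def IsOrthSeg {d : ℕ} (x y : EucR d) : Prop :=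
  ∃ i : Fin d, ∀ j, j ≠ i → x j = y j

/-- `p 0, p 1, …, p n` is an orthogonal polygonal path contained in `S`. -/
def IsOrthPathIn {d : ℕ} (S : Set (EucR d)) (p : ℕ → EucR d) (n : ℕ) : Prop :=
  ∀ k, k < n → IsOrthSeg (p k) (p (k + 1)) ∧ segment ℝ (p k) (p (k + 1)) ⊆ S

/-- `S` is orthogonally connected. -/
def OrthConnected {d : ℕ} (S : Set (EucR d)) : Prop :=
  ∀ x ∈ S, ∀ y ∈ S, ∃ n : ℕ, ∃ p : ℕ → EucR d,
    p 0 = x ∧ p n = y ∧ IsOrthPathIn S p n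

/-- An orthogonal path is a staircase if all edges parallel to the same axis
point in the same direction. -/
def IsStaircaseIn {d : ℕ} (S : Set (EucR d)) (p : ℕ → EucR d) (n : ℕ) : Prop :=
  IsOrthPathIn S p n ∧
    ∀ k, k < n → ∀ l, l < n → ∀ i : Fin d,
      (∀ j, j ≠ i → p k j = p (k + 1) j) → (∀ j, j ≠ i → p l j = p (l + 1) j) →
        0 ≤ (p (k + 1) i - p k i) * (p (l + 1) i - p l i)

/-- `S` is staircase connected. -/
def StaircaseConnected {d : ℕ} (S : Set (EucR d)) : Prop :=
  ∀ x ∈ S, ∀ y ∈ S, ∃ n : ℕ, ∃ p : ℕ → EucR d,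
    p 0 = x ∧ p n = y ∧ IsStaircaseIn S p n

/-- `S` is orthogonally convex. -/
def OrthConvex {d : ℕ} (S : Set (EucR d)) : Prop :=
  ∀ x ∈ S, ∀ y ∈ S, IsOrthSeg x y → segment ℝ x y ⊆ S

/-- A convex body: compact convex with nonempty interior. -/
def IsConvexBody {d : ℕ} (K : Set (EucR d)) : Prop :=
  Convex ℝ K ∧ IsCompact K ∧ (interior K).Nonempty

/-- The point of `ℝ²` with coordinates `(a, b)`. -/
def pt2 (a b : ℝ) : EucR 2 := (WithLp.equiv 2 (Fin 2 → ℝ)).symm ![a, b]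

/-- Horizontal width of `S` at `x`: the length of the connected component
containing `x` of the intersection of `S` with the horizontal line through `x`. -/
def hw (S : Set (EucR 2)) (x : EucR 2) : ℝ≥0∞ :=
  volume (connectedComponentIn {t : ℝ | pt2 t (x 1) ∈ S} (x 0))

/-- Vertical width of `S` at `x`. -/
def vw (S : Set (EucR 2)) (x : EucR 2) : ℝ≥0∞ :=
  volume (connectedComponentIn {t : ℝ | pt2 (x 0) t ∈ S} (x 1))

/-- The set of unit directions from `x` towards points of `K`. -/
def dirSet (x : EucR 2) (K : Set (EucR 2)) : Set (EucR 2) :=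
  {u | ∃ y ∈ K, y ≠ x ∧ u = ‖y - x‖⁻¹ • (y - x)}

/-- `α_x(K)`: the angular (1-dimensional Hausdorff) measure of the set of unit
directions from `x` towards other points of `K`. -/
def angMeasure (x : EucR 2) (K : Set (EucR 2)) : ℝ≥0∞ :=
  μH[1] (dirSet x K)

/-- The half-line from `x` through `y`. -/
def rayFrom (x y : EucR 2) : Set (EucR 2) := {z | ∃ t : ℝ, 0 ≤ t ∧ z = x + t • (y - x)}

/-- `T_x(K)`: the union of the half-lines from `x` through the points of `K \ {x}`. -/
def TCone (x : EucR 2) (K : Set (EucR 2)) : Set (EucR 2) := ⋃ y ∈ K \ {x}, rayFrom x y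

/-- `K` is obtuse: at every boundary point `x`, either `α_x(K) > π/2`, or
`α_x(K) = π/2` and `T_x(K) \ {x}` is not open. -/
def Obtuse (K : Set (EucR 2)) : Prop :=
  ∀ x ∈ frontier K,
    ENNReal.ofReal (Real.pi / 2) < angMeasure x K ∨
      (angMeasure x K = ENNReal.ofReal (Real.pi / 2) ∧ ¬ IsOpen (TCone x K \ {x}))

/-- Inclusion of `ℝ² × ℝ` into `ℝ³`. -/
def incl3 (q : EucR 2) (t : ℝ) : EucR 3 := (WithLp.equiv 2 (Fin 3 → ℝ)).symm ![q 0, q 1, t]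

/-- A piece of a continuum `C`: the closure of a connected component of
`C \ {x}` for some cut point `x` of `C`. -/
def IsPiece (C P : Set (EucR 2)) : Prop :=
  ∃ x ∈ C, ¬ IsPreconnected (C \ {x}) ∧
    ∃ y ∈ C \ {x}, P = closure (connectedComponentIn (C \ {x}) y)

/-- `f` is unimodal on `[a,b]`: non-decreasing on `[a,c]`, non-increasing on `[c,b]`
for some `c ∈ (a,b)`. -/
def Unimodal (f : ℝ → ℝ) (a b : ℝ) : Prop :=
  ∃ c ∈ Ioo a b, MonotoneOn f (Icc a c) ∧ AntitoneOn f (Icc c b)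

/-- `a` is an s-extreme point of `M`: it belongs to a staircase in `M` only as an
endpoint. -/
def SExtreme (M : Set (EucR 2)) (a : EucR 2) : Prop :=
  a ∈ M ∧ ∀ n : ℕ, ∀ γ : ℕ → EucR 2, IsStaircaseIn M γ n →
    a ∈ ⋃ k ∈ Set.Iio n, segment ℝ (γ k) (γ (k + 1)) → a = γ 0 ∨ a = γ n

/-- `M ⊆ ℝ²` is a strip: the preimage of an interval of `ℝ` under a nonzero
linear functional (this includes half-planes and the whole plane). -/
def IsStrip (M : Set (EucR 2)) : Prop :=
  ∃ f : EucR 2 →ₗ[ℝ] ℝ, f ≠ 0 ∧ ∃ I : Set ℝ, I.OrdConnected ∧ M = f ⁻¹' I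

end


noncomputable section AuxProof

section ChunkA
variable {d : ℕ}

lemma abs_coord_le_norm' (x : EucR d) (j : Fin d) : |x j| ≤ ‖x‖ := by
  rw [EuclideanSpace.norm_eq]
  calc |x j| = Real.sqrt (|x j| ^ 2) := (Real.sqrt_sq (abs_nonneg _)).symm
    _ ≤ _ := by
        apply Real.sqrt_le_sqrt
        have := Finset.single_le_sum (f := fun i => ‖x i‖ ^ 2)
          (fun i _ => by positivity) (Finset.mem_univ j)
        simpa [Real.norm_eq_abs] using this

lemma norm_le_norm_coords (u v : EucR d) (h : ∀ j, |u j| ≤ |v j|) : ‖u‖ ≤ ‖v‖ := by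
  rw [EuclideanSpace.norm_eq, EuclideanSpace.norm_eq]
  apply Real.sqrt_le_sqrt
  apply Finset.sum_le_sum
  intro i _
  rw [Real.norm_eq_abs, Real.norm_eq_abs]
  exact pow_le_pow_left₀ (abs_nonneg _) (h i) 2

/-- Staircase between two points. -/
def stair (y z : EucR d) (k : ℕ) : EucR d :=
  WithLp.toLp 2 (fun j : Fin d => if (j : ℕ) < k then z j else y j)

def box (y z : EucR d) : Set (EucR d) :=
  {w | ∀ j, |w j - y j| ≤ |z j - y j| ∧ |w j - z j| ≤ |z j - y j|}

lemma stair_path (y z : EucR d) :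
    stair y z 0 = y ∧ stair y z d = z ∧ IsOrthPathIn (box y z) (stair y z) d := by
  refine ⟨by ext j; simp [stair], by ext j; simp [stair, j.isLt], ?_⟩
  intro k hk
  constructor
  · refine ⟨⟨k, hk⟩, fun j hj => ?_⟩
    have hjk : (j : ℕ) ≠ k := fun h => hj (Fin.ext h)
    show (if (j : ℕ) < k then z j else y j) = (if (j : ℕ) < k + 1 then z j else y j)
    by_cases h1 : (j : ℕ) < k
    · rw [if_pos h1, if_pos (by omega)]
    · rw [if_neg h1, if_neg (by omega)]
  · intro w hw
    rw [segment_eq_image] at hw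
    obtain ⟨t, ht, rfl⟩ := hw
    intro j
    beta_reduce
    have hco : ((1 - t) • stair y z k + t • stair y z (k + 1)) j
        = (1 - t) * (if (j : ℕ) < k then z j else y j)
          + t * (if (j : ℕ) < k + 1 then z j else y j) := rfl
    rw [hco]
    by_cases h1 : (j : ℕ) < k
    · rw [if_pos h1, if_pos (by omega)]
      constructor
      · have : (1 - t) * z j + t * z j - y j = z j - y j := by ring
        rw [this]
      · have : (1 - t) * z j + t * z j - z j = 0 := by ring
        rw [this, abs_zero]; exact abs_nonneg _
    · by_cases h2 : (j : ℕ) < k + 1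
      · rw [if_neg h1, if_pos h2]
        constructor
        · have : (1 - t) * y j + t * z j - y j = t * (z j - y j) := by ring
          rw [this, abs_mul]
          calc |t| * |z j - y j| ≤ 1 * |z j - y j| := by
                apply mul_le_mul_of_nonneg_right _ (abs_nonneg _)
                rw [abs_of_nonneg ht.1]; exact ht.2
            _ = |z j - y j| := one_mul _
        · have : (1 - t) * y j + t * z j - z j = (1 - t) * (y j - z j) := by ring
          rw [this, abs_mul, abs_sub_comm (y j)]
          calc |1 - t| * |z j - y j| ≤ 1 * |z j - y j| := by
                apply mul_le_mul_of_nonneg_right _ (abs_nonneg _)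
                rw [abs_of_nonneg (by linarith [ht.2])]; linarith [ht.1]
            _ = |z j - y j| := one_mul _
      · rw [if_neg h1, if_neg h2]
        constructor
        · have : (1 - t) * y j + t * y j - y j = 0 := by ring
          rw [this, abs_zero]; exact abs_nonneg _
        · have : (1 - t) * y j + t * y j - z j = -(z j - y j) := by ring
          rw [this, abs_neg]

end ChunkA

section ChunkA2
variable {d : ℕ}

lemma IsOrthPathIn.mono' {S T : Set (EucR d)} {p : ℕ → EucR d} {n : ℕ}
    (h : IsOrthPathIn S p n) (hsub : S ⊆ T) : IsOrthPathIn T p n :=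
  fun k hk => ⟨(h k hk).1, (h k hk).2.trans hsub⟩

def catPath {d : ℕ} (p q : ℕ → EucR d) (m : ℕ) (k : ℕ) : EucR d :=
  if k ≤ m then p k else q (k - m)

lemma orthPath_concat {S : Set (EucR d)} {p q : ℕ → EucR d} {m n : ℕ}
    (hp : IsOrthPathIn S p m) (hq : IsOrthPathIn S q n) (h : p m = q 0) :
    ∃ r : ℕ → EucR d, r 0 = p 0 ∧ r (m + n) = q n ∧ IsOrthPathIn S r (m + n) := by
  have key : ∀ k, m ≤ k → catPath p q m k = q (k - m) := by
    intro k hk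
    rcases eq_or_lt_of_le hk with hkm | hkm
    · subst hkm
      simp [catPath, h]
    · rw [catPath, if_neg (by omega)]
  refine ⟨catPath p q m, by simp [catPath], ?_, ?_⟩
  · rw [key (m + n) (by omega)]
    have e : m + n - m = n := by omega
    rw [e]
  · intro k hk
    by_cases h1 : k < m
    · have e1 : catPath p q m k = p k := by rw [catPath, if_pos (by omega)]
      have e2 : catPath p q m (k + 1) = p (k + 1) := by rw [catPath, if_pos (by omega)]
      rw [e1, e2]
      exact hp k h1
    · have hk' : m ≤ k := by omega
      have e1 : catPath p q m k = q (k - m) := key k hk'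
      have e2 : catPath p q m (k + 1) = q (k - m + 1) := by
        rw [key (k + 1) (by omega)]
        have e : k + 1 - m = k - m + 1 := by omega
        rw [e]
      rw [e1, e2]
      exact hq (k - m) (by omega)

lemma orthPath_single {S : Set (EucR d)} {a b : EucR d} (hseg : IsOrthSeg a b)
    (hsub : segment ℝ a b ⊆ S) :
    ∃ r : ℕ → EucR d, r 0 = a ∧ r 1 = b ∧ IsOrthPathIn S r 1 := by
  refine ⟨fun k => if k = 0 then a else b, rfl, rfl, ?_⟩
  intro k hk
  have : k = 0 := by omega
  subst this
  simpa using ⟨hseg, hsub⟩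

lemma joinedIn_of_segment_param {V : Set (EucR d)} {a b : EucR d}
    (h : ∀ t : ℝ, t ∈ Icc (0:ℝ) 1 → (1 - t) • a + t • b ∈ V) : JoinedIn V a b := by
  refine ⟨⟨⟨fun t => (1 - (t : ℝ)) • a + (t : ℝ) • b, by fun_prop⟩, by simp, by simp⟩,
    fun t => h t ⟨t.2.1, t.2.2⟩⟩

lemma joinedIn_of_segment {V : Set (EucR d)} {a b : EucR d}
    (h : segment ℝ a b ⊆ V) : JoinedIn V a b := by
  apply joinedIn_of_segment_param
  intro t ht
  exact h ⟨1 - t, t, by linarith [ht.1, ht.2], ht.1, by ring, rfl⟩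

lemma orthConnected_of_isOpen_isPreconnected {V : Set (EucR d)} (hV : IsOpen V)
    (hc : IsPreconnected V) : OrthConnected V := by
  intro x hx y hy
  set A : Set (EucR d) :=
    {w | w ∈ V ∧ ∃ n : ℕ, ∃ p : ℕ → EucR d, p 0 = x ∧ p n = w ∧ IsOrthPathIn V p n} with hA
  have hxA : x ∈ A := ⟨hx, 0, fun _ => x, rfl, rfl, fun k hk => absurd hk (Nat.not_lt_zero k)⟩
  have extend : ∀ w ∈ A, ∀ v, ∀ r : ℝ, v ∈ Metric.ball w r → Metric.ball w r ⊆ V → v ∈ A := by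
    intro w hw v r hv hball
    obtain ⟨hwV, nw, pw, h0, h1, hpath⟩ := hw
    obtain ⟨s0, s1, spath⟩ := stair_path w v
    have hboxsub : box w v ⊆ Metric.ball w r := by
      intro u hu
      rw [Metric.mem_ball, dist_eq_norm]
      have hb : ‖v - w‖ < r := by rw [← dist_eq_norm, ← Metric.mem_ball]; exact hv
      exact lt_of_le_of_lt (norm_le_norm_coords (u - w) (v - w) (fun j => by simpa using (hu j).1)) hb
    obtain ⟨rr, r0, r1, rpath⟩ := orthPath_concat hpath
      ((spath.mono' hboxsub).mono' hball) (by rw [h1, s0])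
    exact ⟨hball hv, nw + d, rr, by rw [r0, h0], by rw [r1, s1], rpath⟩
  have hAopen : IsOpen A := by
    rw [Metric.isOpen_iff]
    intro w hw
    obtain ⟨r, hr, hball⟩ := Metric.isOpen_iff.mp hV w hw.1
    exact ⟨r, hr, fun v hv => extend w hw v r hv hball⟩
  have hBopen : IsOpen (V \ A) := by
    rw [Metric.isOpen_iff]
    intro w hw
    obtain ⟨r, hr, hball⟩ := Metric.isOpen_iff.mp hV w hw.1
    refine ⟨r, hr, fun v hv => ⟨hball hv, fun hvA => hw.2 ?_⟩⟩
    have hwball : w ∈ Metric.ball v r := by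
      rw [Metric.mem_ball, dist_comm, ← Metric.mem_ball]; exact hv
    obtain ⟨s0, s1, spath⟩ := stair_path v w
    have hboxsub : box v w ⊆ Metric.ball w r := by
      intro u hu
      rw [Metric.mem_ball, dist_eq_norm]
      have hb : ‖w - v‖ < r := by rw [← dist_eq_norm, ← Metric.mem_ball]; exact hwball
      exact lt_of_le_of_lt (norm_le_norm_coords (u - w) (w - v) (fun j => by simpa using (hu j).2)) hb
    obtain ⟨hvV, nv, pv, h0, h1, hpath⟩ := hvA
    obtain ⟨rr, r0, r1, rpath⟩ := orthPath_concat hpath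
      ((spath.mono' hboxsub).mono' hball) (by rw [h1, s0])
    exact ⟨hw.1, nv + d, rr, by rw [r0, h0], by rw [r1, s1], rpath⟩
  by_cases hyA : y ∈ A
  · obtain ⟨-, nn, pp, h0, h1, hpath⟩ := hyA
    exact ⟨nn, pp, h0, h1, hpath⟩
  · exfalso
    obtain ⟨w, hw⟩ := hc A (V \ A) hAopen hBopen
      (fun u hu => by by_cases h : u ∈ A; exacts [Or.inl h, Or.inr ⟨hu, h⟩])
      ⟨x, hx, hxA⟩ ⟨y, hy, hy, hyA⟩
    exact hw.2.2.2 hw.2.1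

end ChunkA2

section ChunkC
variable {d : ℕ}

lemma infDist_segment_le {Kb : Set (EucR d)} (hconv : Convex ℝ Kb) (hcomp : IsCompact Kb)
    (hne : Kb.Nonempty) {a b w : EucR d} (hw : w ∈ segment ℝ a b) :
    Metric.infDist w Kb ≤ max (Metric.infDist a Kb) (Metric.infDist b Kb) := by
  obtain ⟨pa, hpa, hda⟩ := hcomp.exists_infDist_eq_dist hne a
  obtain ⟨pb, hpb, hdb⟩ := hcomp.exists_infDist_eq_dist hne b
  rw [segment_eq_image] at hw
  obtain ⟨t, ht, rfl⟩ := hw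
  have hm : (1 - t) • pa + t • pb ∈ Kb := hconv hpa hpb (by linarith [ht.2]) ht.1 (by ring)
  refine le_trans (Metric.infDist_le_dist_of_mem hm) ?_
  rw [dist_eq_norm]
  have he : (1 - t) • a + t • b - ((1 - t) • pa + t • pb)
      = (1 - t) • (a - pa) + t • (b - pb) := by module
  rw [he]
  have h1 : ‖(1 - t) • (a - pa)‖ = (1 - t) * dist a pa := by
    rw [norm_smul, Real.norm_eq_abs, abs_of_nonneg (by linarith [ht.2]), dist_eq_norm]
  have h2 : ‖t • (b - pb)‖ = t * dist b pb := by
    rw [norm_smul, Real.norm_eq_abs, abs_of_nonneg ht.1, dist_eq_norm]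
  have hma : dist a pa ≤ max (Metric.infDist a Kb) (Metric.infDist b Kb) := by
    rw [← hda]; exact le_max_left _ _
  have hmb : dist b pb ≤ max (Metric.infDist a Kb) (Metric.infDist b Kb) := by
    rw [← hdb]; exact le_max_right _ _
  calc ‖(1 - t) • (a - pa) + t • (b - pb)‖ ≤ ‖(1 - t) • (a - pa)‖ + ‖t • (b - pb)‖ :=
        norm_add_le _ _
    _ = (1 - t) * dist a pa + t * dist b pb := by rw [h1, h2]
    _ ≤ (1 - t) * max (Metric.infDist a Kb) (Metric.infDist b Kb)
        + t * max (Metric.infDist a Kb) (Metric.infDist b Kb) := by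
        apply add_le_add
        · exact mul_le_mul_of_nonneg_left hma (by linarith [ht.2])
        · exact mul_le_mul_of_nonneg_left hmb ht.1
    _ = max (Metric.infDist a Kb) (Metric.infDist b Kb) := by ring

/-- The "ring" around a convex body is path-connected (`d ≥ 2`). -/
lemma ring_joinedIn (hd : 2 ≤ d) {Kb : Set (EucR d)} (hconv : Convex ℝ Kb)
    (hcomp : IsCompact Kb) (hint : (interior Kb).Nonempty) {δ : ℝ} (hδ : 0 < δ)
    {a b : EucR d} (ha : a ∉ Kb ∧ Metric.infDist a Kb < δ)
    (hb : b ∉ Kb ∧ Metric.infDist b Kb < δ) :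
    JoinedIn {w : EucR d | w ∉ Kb ∧ Metric.infDist w Kb < δ} a b := by
  set N : Set (EucR d) := {w : EucR d | w ∉ Kb ∧ Metric.infDist w Kb < δ} with hN
  obtain ⟨c, hc⟩ := hint
  have hcK : c ∈ Kb := interior_subset hc
  have hKne : Kb.Nonempty := ⟨c, hcK⟩
  set Kc : Set (EucR d) := (fun y => -c + y) '' Kb with hKcdef
  have hKcconv : Convex ℝ Kc := hconv.translate (-c)
  have hKccomp : IsCompact Kc := hcomp.image (continuous_const.add continuous_id)
  have hKcclosed : IsClosed Kc := hKccomp.isClosed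
  have hmemKc : ∀ v : EucR d, v ∈ Kc ↔ c + v ∈ Kb := by
    intro v
    constructor
    · rintro ⟨y, hy, rfl⟩
      simpa using hy
    · intro hv
      exact ⟨c + v, hv, neg_add_cancel_left c v⟩
  have hKcpre : Kc = (fun v : EucR d => c + v) ⁻¹' Kb := Set.ext hmemKc
  have hKc0 : Kc ∈ nhds (0 : EucR d) := by
    rw [hKcpre]
    apply ContinuousAt.preimage_mem_nhds (by fun_prop)
    simpa using mem_interior_iff_mem_nhds.mp hc
  have habs : Absorbent ℝ Kc := absorbent_nhds_zero hKc0
  have hvnb : Bornology.IsVonNBounded ℝ Kc :=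
    (NormedSpace.isVonNBounded_iff ℝ).mpr hKccomp.isBounded
  obtain ⟨r0, hr0⟩ := hKccomp.isBounded.subset_closedBall 0
  set Db : ℝ := max r0 1 with hDbdef
  have hDbpos : (0:ℝ) < Db := lt_of_lt_of_le one_pos (le_max_right _ _)
  have hDb : ∀ v ∈ Kc, ‖v‖ ≤ Db := by
    intro v hv
    have := hr0 hv
    rw [Metric.mem_closedBall, dist_zero_right] at this
    exact this.trans (le_max_left _ _)
  set ε : ℝ := δ / (2 * (Db + 1)) with hεdef
  have hεpos : 0 < ε := by positivity
  have hεDb : ε * Db < δ := by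
    rw [hεdef]
    rw [div_mul_eq_mul_div, div_lt_iff₀ (by positivity)]
    nlinarith
  set s₀ : ℝ := 1 + ε with hs₀def
  have hs₀ : 1 < s₀ := by simp [hs₀def, hεpos]
  -- gauge facts
  have hmemK : ∀ v : EucR d, gauge Kc v ≤ 1 → c + v ∈ Kb := by
    intro v hv
    have : v ∈ closure Kc := (gauge_le_one_iff_mem_closure hKcconv hKc0).mp hv
    rw [hKcclosed.closure_eq] at this
    exact (hmemKc v).mp this
  have hgauge_not_mem : ∀ w : EucR d, w ∉ Kb → 1 < gauge Kc (w - c) := by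
    intro w hw
    by_contra hcon
    push_neg at hcon
    exact hw (by simpa using hmemK (w - c) hcon)
  have hGpos : ∀ w : EucR d, w ≠ c → 0 < gauge Kc (w - c) := by
    intro w hw
    exact (gauge_pos habs hvnb).mpr (sub_ne_zero.mpr hw)
  -- the outward projection map
  set φ : EucR d → EucR d := fun w => c + (s₀ * (gauge Kc (w - c))⁻¹) • (w - c) with hφdef
  have hφgauge : ∀ w : EucR d, w ≠ c → gauge Kc (φ w - c) = s₀ := by
    intro w hw
    have hG := hGpos w hw
    have he : φ w - c = (s₀ * (gauge Kc (w - c))⁻¹) • (w - c) :=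
      add_sub_cancel_left c _
    rw [he, gauge_smul_of_nonneg (by positivity), smul_eq_mul]
    field_simp
  have hφnotmem : ∀ w : EucR d, w ≠ c → φ w ∉ Kb := by
    intro w hw hmem
    have h1 : φ w - c ∈ Kc := (hmemKc _).mpr (by simpa using hmem)
    have h2 := gauge_le_one_of_mem h1
    rw [hφgauge w hw] at h2
    linarith
  have hφdist : ∀ w : EucR d, w ≠ c → Metric.infDist (φ w) Kb < δ := by
    intro w hw
    have hG := hGpos w hw
    set u : EucR d := (gauge Kc (w - c))⁻¹ • (w - c) with hudef
    have hgu : gauge Kc u ≤ 1 := by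
      rw [hudef, gauge_smul_of_nonneg (by positivity), smul_eq_mul,
        inv_mul_cancel₀ (ne_of_gt hG)]
    have hbd : c + u ∈ Kb := hmemK u hgu
    have huKc : u ∈ Kc := (hmemKc u).mpr hbd
    have hunorm : ‖u‖ ≤ Db := hDb u huKc
    have hφu : φ w = c + s₀ • u := by
      rw [hudef, smul_smul]
    have hdist : dist (φ w) (c + u) = (s₀ - 1) * ‖u‖ := by
      rw [hφu, dist_eq_norm]
      have : c + s₀ • u - (c + u) = (s₀ - 1) • u := by module
      rw [this, norm_smul, Real.norm_eq_abs, abs_of_nonneg (by linarith)]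
    calc Metric.infDist (φ w) Kb ≤ dist (φ w) (c + u) := Metric.infDist_le_dist_of_mem hbd
      _ = (s₀ - 1) * ‖u‖ := hdist
      _ ≤ ε * Db := by
          have : s₀ - 1 = ε := by rw [hs₀def]; ring
          rw [this]
          exact mul_le_mul_of_nonneg_left hunorm hεpos.le
      _ < δ := hεDb
  have hne_c : ∀ w : EucR d, w ∉ Kb → w ≠ c := fun w hw he => hw (he ▸ hcK)
  -- radial connection from w to φ w
  have hradial : ∀ w ∈ N, JoinedIn N w (φ w) := by
    intro w hwN
    have hw : w ≠ c := hne_c w hwN.1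
    have hG1 : 1 < gauge Kc (w - c) := hgauge_not_mem w hwN.1
    have hG := hGpos w hw
    apply joinedIn_of_segment_param
    intro t ht
    have hptseg : (1 - t) • w + t • φ w ∈ segment ℝ w (φ w) := by
      rw [segment_eq_image]
      exact ⟨t, ht, rfl⟩
    set g : ℝ := gauge Kc (w - c) with hgdef
    refine ⟨?_, ?_⟩
    · -- ∉ Kb
      intro hmem
      have hvKc : (1 - t) • w + t • φ w - c ∈ Kc := (hmemKc _).mpr (by simpa using hmem)
      have hle := gauge_le_one_of_mem hvKc
      have heq : (1 - t) • w + t • φ w - c = ((1 - t) + t * (s₀ * g⁻¹)) • (w - c) := by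
        show (1 - t) • w + t • (c + (s₀ * g⁻¹) • (w - c)) - c
            = ((1 - t) + t * (s₀ * g⁻¹)) • (w - c)
        module
      have hg0 : (0:ℝ) ≤ s₀ * g⁻¹ := by positivity
      have hco : (0:ℝ) ≤ (1 - t) + t * (s₀ * g⁻¹) := by
        have := mul_nonneg ht.1 hg0
        linarith [ht.2]
      rw [heq, gauge_smul_of_nonneg hco, smul_eq_mul, ← hgdef] at hle
      have hgne : g ≠ 0 := ne_of_gt hG
      have hexp : ((1 - t) + t * (s₀ * g⁻¹)) * g = (1 - t) * g + t * s₀ := by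
        field_simp
      rw [hexp] at hle
      rcases lt_or_eq_of_le ht.2 with h1 | h1
      · nlinarith [mul_pos (sub_pos.mpr h1) (sub_pos.mpr hG1), mul_nonneg ht.1
          (sub_pos.mpr hs₀).le]
      · rw [h1] at hle
        simp at hle
        linarith
    · -- infDist < δ
      refine lt_of_le_of_lt (infDist_segment_le hconv hcomp hKne hptseg) ?_
      exact max_lt hwN.2 (hφdist w hw)
  -- middle connection
  have hrank : 1 < Module.rank ℝ (EucR d) := by
    have hfr : Module.finrank ℝ (EucR d) = d := finrank_euclideanSpace_fin
    have h2 := Module.finrank_eq_rank ℝ (EucR d)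
    rw [hfr] at h2
    rw [← h2]
    exact_mod_cast lt_of_lt_of_le one_lt_two hd
  have hac : a ≠ c := hne_c a ha.1
  have hbc : b ≠ c := hne_c b hb.1
  obtain ⟨γ, hγ⟩ := (isPathConnected_compl_singleton_of_one_lt_rank hrank c).joinedIn
    a (by simpa using hac) b (by simpa using hbc)
  have hGcont : Continuous (fun w : EucR d => gauge Kc (w - c)) :=
    (continuous_gauge hKcconv hKc0).comp (continuous_id.sub continuous_const)
  have hφcont : ContinuousOn φ ({c}ᶜ : Set (EucR d)) := by
    apply ContinuousOn.add continuousOn_const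
    apply ContinuousOn.fun_smul
    · apply ContinuousOn.mul continuousOn_const
      apply ContinuousOn.inv₀ hGcont.continuousOn
      intro w hw
      exact ne_of_gt (hGpos w (by simpa using hw))
    · exact (continuous_id.sub continuous_const).continuousOn
  have hmid : JoinedIn N (φ a) (φ b) := by
    refine ⟨⟨⟨fun t => φ (γ t), ?_⟩, ?_, ?_⟩, ?_⟩
    · exact hφcont.comp_continuous γ.continuous (fun t => hγ t)
    · show φ (γ 0) = φ a
      rw [γ.source]
    · show φ (γ 1) = φ b
      rw [γ.target]
    · intro t
      have hne : γ t ≠ c := by simpa using hγ t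
      exact ⟨hφnotmem _ hne, hφdist _ hne⟩
  exact (hradial a ha).trans (hmid.trans (hradial b hb).symm)

end ChunkC

section ChunkD

lemma compl_iUnion_isPathConnected (d n : ℕ) (hd : 2 ≤ d) (K : Fin n → Set (EucR d))
    (hK : ∀ i, IsConvexBody (K i)) (hdisj : Pairwise (Function.onFun Disjoint K)) :
    IsPathConnected ((⋃ i, K i)ᶜ) := by
  classical
  set U : Set (EucR d) := ⋃ i, K i with hUdef
  set W : Set (EucR d) := Uᶜ with hWdef
  have hUcomp : IsCompact U := isCompact_iUnion fun i => (hK i).2.1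
  have hUclosed : IsClosed U := hUcomp.isClosed
  have hKne : ∀ i, (K i).Nonempty := fun i =>
    ((hK i).2.2).mono interior_subset |>.elim fun x hx => ⟨x, hx⟩
  set i0 : Fin d := ⟨0, by omega⟩ with hi0
  set e : EucR d := EuclideanSpace.single i0 (1:ℝ) with hedef
  have hcoord : Continuous (fun w : EucR d => w i0) := by
    exact (continuous_apply i0).comp (PiLp.continuous_ofLp 2 _)
  have he_i0 : e i0 = 1 := by
    rw [hedef, EuclideanSpace.single_apply, if_pos rfl]
  have hray_coord : ∀ (w : EucR d) (t : ℝ), (w + t • e) i0 = w i0 + t := by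
    intro w t
    have : (w + t • e) i0 = w i0 + t * e i0 := rfl
    rw [this, he_i0, mul_one]
  obtain ⟨R, hR⟩ := hUcomp.isBounded.subset_closedBall 0
  set H : Set (EucR d) := {w : EucR d | R < w i0} with hHdef
  have hHW : H ⊆ W := by
    intro w hw hwU
    have h1 : ‖w‖ ≤ R := by
      have := hR hwU
      rwa [Metric.mem_closedBall, dist_zero_right] at this
    have h2 : |w i0| ≤ ‖w‖ := abs_coord_le_norm' w i0
    have h3 : R < w i0 := hw
    have := le_abs_self (w i0)
    linarith
  have hHconv : Convex ℝ H := by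
    intro u hu v hv s t hs ht hst
    show R < (s • u + t • v) i0
    have hco : (s • u + t • v) i0 = s * u i0 + t * v i0 := rfl
    rw [hco]
    have hu' : R < u i0 := hu
    have hv' : R < v i0 := hv
    by_cases hs' : 0 < s
    · have h1 : s * R < s * u i0 := (mul_lt_mul_iff_right₀ hs').mpr hu'
      have h2 : t * R ≤ t * v i0 := mul_le_mul_of_nonneg_left hv'.le ht
      have h4 : s * R + t * R = R := by rw [← add_mul, hst, one_mul]
      linarith
    · have hs0 : s = 0 := le_antisymm (not_lt.mp hs') hs
      have ht1 : t = 1 := by rw [hs0] at hst; linarith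
      rw [hs0, ht1]
      simpa using hv'
  -- safety margins around each body
  have ring_spec : ∀ i : Fin n, ∃ δi : ℝ, 0 < δi ∧
      ∀ w : EucR d, w ∉ K i → Metric.infDist w (K i) < δi → w ∈ W := by
    intro i
    set rest : Set (EucR d) := ⋃ j ∈ ({i}ᶜ : Set (Fin n)), K j with hrest
    have hrestcomp : IsCompact rest :=
      (Set.toFinite _).isCompact_biUnion (fun j _ => (hK j).2.1)
    have hdisjrest : Disjoint (K i) rest := by
      rw [hrest]
      rw [Set.disjoint_iUnion₂_right]
      intro j hj
      exact hdisj (Ne.symm hj)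
    obtain ⟨δi, hδipos, hδidisj⟩ :=
      hdisjrest.exists_thickenings (hK i).2.1 hrestcomp.isClosed
    refine ⟨δi, hδipos, ?_⟩
    intro w hwKi hwdist hwU
    obtain ⟨j, hwj⟩ := Set.mem_iUnion.mp hwU
    have hji : j ≠ i := fun h => hwKi (h ▸ hwj)
    have h1 : w ∈ Metric.thickening δi (K i) :=
      (Metric.mem_thickening_iff_infDist_lt (hKne i)).mpr hwdist
    have h2 : w ∈ Metric.thickening δi rest :=
      Metric.self_subset_thickening hδipos rest (Set.mem_biUnion hji hwj)
    exact hδidisj.le_bot ⟨h1, h2⟩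
  choose δf hδpos hδsafe using ring_spec
  -- top points of each body
  have tops : ∀ i : Fin n, ∃ z ∈ K i, IsMaxOn (fun w : EucR d => w i0) (K i) z :=
    fun i => (hK i).2.1.exists_isMaxOn (hKne i) hcoord.continuousOn
  choose topf htopmem htopmax using tops
  set a : Fin n → EucR d := fun i => topf i + (δf i / 2) • e with hadef
  have ha_coord : ∀ i, (a i) i0 = (topf i) i0 + δf i / 2 := fun i => hray_coord _ _
  have ha_not_mem : ∀ i, a i ∉ K i := by
    intro i hmem
    have h5 : (a i) i0 ≤ (topf i) i0 := htopmax i hmem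
    rw [ha_coord i] at h5
    linarith [hδpos i]
  have ha_dist : ∀ i, Metric.infDist (a i) (K i) < δf i := by
    intro i
    have h1 : Metric.infDist (a i) (K i) ≤ dist (a i) (topf i) :=
      Metric.infDist_le_dist_of_mem (htopmem i)
    have h2 : dist (a i) (topf i) = δf i / 2 := by
      rw [hadef]
      simp only [dist_eq_norm, add_sub_cancel_left]
      rw [norm_smul, Real.norm_eq_abs, abs_of_pos (by linarith [hδpos i]), hedef,
        EuclideanSpace.norm_single, norm_one, mul_one]
    rw [h2] at h1
    linarith [hδpos i]
  have haW : ∀ i, a i ∈ W := fun i => hδsafe i (a i) (ha_not_mem i) (ha_dist i)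
  -- the inductive escape
  have escape : ∀ (m : ℕ) (w : EucR d), w ∈ W →
      (Finset.univ.filter (fun j => w i0 ≤ (topf j) i0)).card ≤ m →
      ∃ h ∈ H, JoinedIn W w h := by
    have free : ∀ w ∈ W, (∀ t : ℝ, 0 ≤ t → w + t • e ∉ U) → ∃ h ∈ H, JoinedIn W w h := by
      intro w hw hfree
      set T : ℝ := max 0 (R - w i0) + 1 with hTdef
      have hT0 : 0 ≤ T := by positivity
      refine ⟨w + T • e, ?_, ?_⟩
      · show R < (w + T • e) i0
        rw [hray_coord]
        have := le_max_right 0 (R - w i0)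
        linarith
      · apply joinedIn_of_segment_param
        intro t ht
        have heq : (1 - t) • w + t • (w + T • e) = w + (t * T) • e := by module
        rw [heq]
        exact hfree (t * T) (mul_nonneg ht.1 hT0)
    have step : ∀ w ∈ W, (¬ ∀ t : ℝ, 0 ≤ t → w + t • e ∉ U) →
        ∃ i : Fin n, w i0 ≤ (topf i) i0 ∧ JoinedIn W w (a i) ∧
          ∀ j, (a i) i0 ≤ (topf j) i0 → (w i0 ≤ (topf j) i0 ∧ j ≠ i) := by
      intro w hw hblocked
      push_neg at hblocked
      obtain ⟨t1, ht1, ht1U⟩ := hblocked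
      set A : Set ℝ := {t : ℝ | 0 ≤ t ∧ w + t • e ∈ U} with hAdef
      have hAne : A.Nonempty := ⟨t1, ht1, ht1U⟩
      have hAbdd : BddBelow A := ⟨0, fun t htA => htA.1⟩
      have hAclosed : IsClosed A := by
        have : A = Ici (0:ℝ) ∩ (fun t : ℝ => w + t • e) ⁻¹' U := by
          ext t; simp [hAdef, mem_Ici]
        rw [this]
        exact isClosed_Ici.inter (hUclosed.preimage (by fun_prop))
      set t0 : ℝ := sInf A with ht0def
      have ht0A : t0 ∈ A := hAclosed.csInf_mem hAne hAbdd
      have ht0nn : 0 ≤ t0 := ht0A.1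
      obtain ⟨i, hzi⟩ := Set.mem_iUnion.mp ht0A.2
      have ht0pos : 0 < t0 := by
        rcases lt_or_eq_of_le ht0nn with h | h
        · exact h
        · exfalso
          have h2 : w + t0 • e ∈ U := ht0A.2
          rw [← h] at h2
          exact hw (by simpa using h2)
      have hpre : ∀ t : ℝ, 0 ≤ t → t < t0 → w + t • e ∈ W := by
        intro t htnn htlt hmem
        exact absurd (csInf_le hAbdd ⟨htnn, hmem⟩) (not_le.mpr htlt)
      -- the body K i is blocking; its top is above w
      have htopi : w i0 + t0 ≤ (topf i) i0 := by
        have h5 : (w + t0 • e) i0 ≤ (topf i) i0 := htopmax i hzi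
        rw [hray_coord] at h5
        exact h5
      have hwtop : w i0 ≤ (topf i) i0 := by linarith
      set η : ℝ := min t0 (δf i) / 2 with hηdef
      have hηpos : 0 < η := by
        have := lt_min ht0pos (hδpos i)
        positivity
      have hηt0 : η < t0 := by
        have h1 : min t0 (δf i) ≤ t0 := min_le_left _ _
        linarith
      have hηδ : η < δf i := by
        have h1 : min t0 (δf i) ≤ δf i := min_le_right _ _
        linarith [hδpos i]
      set b : EucR d := w + (t0 - η) • e with hbdef
      have hbW : b ∈ W := hpre (t0 - η) (by linarith) (by linarith)
      have hbKi : b ∉ K i := fun hmem => hbW (Set.mem_iUnion.mpr ⟨i, hmem⟩)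
      have hbdist : Metric.infDist b (K i) < δf i := by
        have h1 : Metric.infDist b (K i) ≤ dist b (w + t0 • e) :=
          Metric.infDist_le_dist_of_mem hzi
        have h2 : dist b (w + t0 • e) = η := by
          rw [hbdef, dist_eq_norm]
          have : w + (t0 - η) • e - (w + t0 • e) = (-η) • e := by module
          rw [this, norm_smul, Real.norm_eq_abs, abs_neg, abs_of_pos hηpos, hedef,
            EuclideanSpace.norm_single, norm_one, mul_one]
        linarith
      have hJ1 : JoinedIn W w b := by
        apply joinedIn_of_segment_param
        intro t ht
        have heq : (1 - t) • w + t • b = w + (t * (t0 - η)) • e := by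
          rw [hbdef]; module
        rw [heq]
        apply hpre
        · exact mul_nonneg ht.1 (by linarith)
        · have h1 : t * (t0 - η) ≤ 1 * (t0 - η) :=
            mul_le_mul_of_nonneg_right ht.2 (by linarith)
          linarith
      have hJ2 : JoinedIn W b (a i) := by
        have hring := ring_joinedIn hd (hK i).1 (hK i).2.1 (hK i).2.2 (hδpos i)
          ⟨hbKi, hbdist⟩ ⟨ha_not_mem i, ha_dist i⟩
        exact hring.mono (fun u hu => hδsafe i u hu.1 hu.2)
      refine ⟨i, hwtop, hJ1.trans hJ2, ?_⟩
      intro j hj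
      rw [ha_coord i] at hj
      constructor
      · linarith
      · intro hji
        rw [hji] at hj
        linarith [hδpos i]
    intro m
    induction m with
    | zero =>
      intro w hw hcard
      by_cases hfr : ∀ t : ℝ, 0 ≤ t → w + t • e ∉ U
      · exact free w hw hfr
      · exfalso
        obtain ⟨i, hi, -, -⟩ := step w hw hfr
        have : i ∈ Finset.univ.filter (fun j => w i0 ≤ (topf j) i0) := by
          simp [hi]
        have := Finset.card_pos.mpr ⟨i, this⟩
        omega
    | succ m ih =>
      intro w hw hcard
      by_cases hfr : ∀ t : ℝ, 0 ≤ t → w + t • e ∉ U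
      · exact free w hw hfr
      · obtain ⟨i, hi, hJ, hsub⟩ := step w hw hfr
        have hisub : Finset.univ.filter (fun j => (a i) i0 ≤ (topf j) i0) ⊆
            (Finset.univ.filter (fun j => w i0 ≤ (topf j) i0)).erase i := by
          intro j hj
          rw [Finset.mem_filter] at hj
          obtain ⟨h1, h2⟩ := hsub j hj.2
          rw [Finset.mem_erase, Finset.mem_filter]
          exact ⟨h2, Finset.mem_univ j, h1⟩
        have himem : i ∈ Finset.univ.filter (fun j => w i0 ≤ (topf j) i0) := by
          simp [hi]
        have hcard2 : (Finset.univ.filter (fun j => (a i) i0 ≤ (topf j) i0)).card ≤ m := by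
          have h1 := Finset.card_le_card hisub
          rw [Finset.card_erase_of_mem himem] at h1
          omega
        obtain ⟨h, hh, hJ2⟩ := ih (a i) (haW i) hcard2
        exact ⟨h, hh, hJ.trans hJ2⟩
  -- conclusion
  set pt : EucR d := (R + 1) • e with hptdef
  have hptH : pt ∈ H := by
    show R < pt i0
    have : pt i0 = (R + 1) * e i0 := rfl
    rw [this, he_i0, mul_one]
    linarith
  refine ⟨pt, hHW hptH, ?_⟩
  intro y hy
  obtain ⟨h1, hh1, hJ1⟩ := escape _ pt (hHW hptH) le_rfl
  obtain ⟨h2, hh2, hJ2⟩ := escape _ y hy le_rfl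
  have hJH : JoinedIn H h1 h2 :=
    (hHconv.isPathConnected ⟨h1, hh1⟩).joinedIn h1 hh1 h2 hh2
  exact hJ1.trans ((hJH.mono hHW).trans hJ2.symm)

end ChunkD

end AuxProof

/-- The intersection of the complements of the interiors of finitely many pairwise
disjoint convex bodies in `ℝ^d` (`d ≥ 2`) is orthogonally connected. -/
theorem orthConnected_iInter_compl_interior (d n : ℕ) (hd : 2 ≤ d)
    (K : Fin n → Set (EucR d)) (hK : ∀ i, IsConvexBody (K i))
    (hdisj : Pairwise (Function.onFun Disjoint K)) :
    OrthConnected (⋂ i, (interior (K i))ᶜ) := by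
  classical
  set S : Set (EucR d) := ⋂ i, (interior (K i))ᶜ with hSdef
  set U : Set (EucR d) := ⋃ i, K i with hUdef
  set W : Set (EucR d) := Uᶜ with hWdef
  have hUcomp : IsCompact U := isCompact_iUnion fun i => (hK i).2.1
  have hUclosed : IsClosed U := hUcomp.isClosed
  have hKne : ∀ i, (K i).Nonempty := fun i =>
    ((hK i).2.2).mono interior_subset |>.elim fun x hx => ⟨x, hx⟩
  have hWS : W ⊆ S := by
    intro w hw
    rw [hSdef, Set.mem_iInter]
    intro i hint
    exact hw (Set.mem_iUnion.mpr ⟨i, interior_subset hint⟩)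
  have hWopen : IsOpen W := isOpen_compl_iff.mpr hUclosed
  have hWconn : IsPreconnected W :=
    (compl_iUnion_isPathConnected d n hd K hK hdisj).isConnected.isPreconnected
  have hOC := orthConnected_of_isOpen_isPreconnected hWopen hWconn
  set i0 : Fin d := ⟨0, by omega⟩ with hi0
  set e : EucR d := EuclideanSpace.single i0 (1:ℝ) with hedef
  have he_i0 : e i0 = 1 := by
    rw [hedef, EuclideanSpace.single_apply, if_pos rfl]
  -- safety margins
  have ring_spec : ∀ i : Fin n, ∃ δi : ℝ, 0 < δi ∧
      ∀ w : EucR d, w ∉ K i → Metric.infDist w (K i) < δi → w ∈ W := by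
    intro i
    set rest : Set (EucR d) := ⋃ j ∈ ({i}ᶜ : Set (Fin n)), K j with hrest
    have hrestcomp : IsCompact rest :=
      (Set.toFinite _).isCompact_biUnion (fun j _ => (hK j).2.1)
    have hdisjrest : Disjoint (K i) rest := by
      rw [hrest, Set.disjoint_iUnion₂_right]
      intro j hj
      exact hdisj (Ne.symm hj)
    obtain ⟨δi, hδipos, hδidisj⟩ :=
      hdisjrest.exists_thickenings (hK i).2.1 hrestcomp.isClosed
    refine ⟨δi, hδipos, ?_⟩
    intro w hwKi hwdist hwU
    obtain ⟨j, hwj⟩ := Set.mem_iUnion.mp hwU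
    have hji : j ≠ i := fun h => hwKi (h ▸ hwj)
    have h1 : w ∈ Metric.thickening δi (K i) :=
      (Metric.mem_thickening_iff_infDist_lt (hKne i)).mpr hwdist
    have h2 : w ∈ Metric.thickening δi rest :=
      Metric.self_subset_thickening hδipos rest (Set.mem_biUnion hji hwj)
    exact hδidisj.le_bot ⟨h1, h2⟩
  choose δf hδpos hδsafe using ring_spec
  -- exit segment from a point of S to a point of W
  have exit : ∀ x ∈ S, ∃ x' ∈ W, IsOrthSeg x x' ∧ segment ℝ x x' ⊆ S := by
    intro x hx
    by_cases hxU : x ∈ U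
    · obtain ⟨i, hxi⟩ := Set.mem_iUnion.mp hxU
      have hxint : x ∉ interior (K i) := Set.mem_iInter.mp hx i
      have hdir : ∃ σ : ℝ, (σ = 1 ∨ σ = -1) ∧
          ∀ t : ℝ, 0 < t → x + (t * σ) • e ∉ interior (K i) := by
        by_contra hcon
        push_neg at hcon
        obtain ⟨tp, htp, htpmem⟩ := hcon 1 (Or.inl rfl)
        obtain ⟨tm, htm, htmmem⟩ := hcon (-1) (Or.inr rfl)
        rw [mul_one] at htpmem
        have htmmem' : x + (-tm) • e ∈ interior (K i) := by
          have : tm * (-1) = -tm := by ring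
          rwa [this] at htmmem
        have hspos : (0:ℝ) < tp + tm := by linarith
        have hsne : tp + tm ≠ 0 := ne_of_gt hspos
        have h1 : tm / (tp + tm) + tp / (tp + tm) = 1 := by
          rw [← add_div, div_eq_one_iff_eq hsne]
          ring
        have key : tm / (tp + tm) * tp + tp / (tp + tm) * (-tm) = 0 := by
          field_simp
          ring
        have expand : (tm / (tp + tm)) • (x + tp • e) + (tp / (tp + tm)) • (x + (-tm) • e)
            = (tm / (tp + tm) + tp / (tp + tm)) • x
              + (tm / (tp + tm) * tp + tp / (tp + tm) * (-tm)) • e := by module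
        have hxeq : (tm / (tp + tm)) • (x + tp • e) + (tp / (tp + tm)) • (x + (-tm) • e)
            = x := by
          rw [expand, h1, key, one_smul, zero_smul, add_zero]
        have hmem := (hK i).1.interior htpmem htmmem'
          (div_nonneg htm.le hspos.le) (div_nonneg htp.le hspos.le) h1
        rw [hxeq] at hmem
        exact hxint hmem
      obtain ⟨σ, hσval, hσ⟩ := hdir
      set ve : EucR d := σ • e with hvedef
      have hve_norm : ‖ve‖ = 1 := by
        rw [hvedef, norm_smul, hedef, EuclideanSpace.norm_single, norm_one, mul_one,
          Real.norm_eq_abs]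
        rcases hσval with h | h <;> rw [h] <;> norm_num
      have hveray : ∀ t : ℝ, t • ve = (t * σ) • e := by
        intro t
        rw [hvedef, smul_smul]
      set A : Set ℝ := {t : ℝ | 0 ≤ t ∧ x + t • ve ∈ K i} with hAdef
      have h0A : (0:ℝ) ∈ A := by
        refine ⟨le_refl 0, ?_⟩
        have : x + (0:ℝ) • ve = x := by module
        rw [this]
        exact hxi
      have hAconv : Convex ℝ A := by
        intro t1 h1 t2 h2 s t hs ht hst
        have hnn : (0:ℝ) ≤ s * t1 + t * t2 := by
          have := mul_nonneg hs h1.1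
          have := mul_nonneg ht h2.1
          linarith
        have hc : x + (s * t1 + t * t2) • ve
            = s • (x + t1 • ve) + t • (x + t2 • ve) := by
          have hexp : s • (x + t1 • ve) + t • (x + t2 • ve)
              = (s + t) • x + (s * t1 + t * t2) • ve := by module
          rw [hexp, hst, one_smul]
        have hmm : s • t1 + t • t2 = s * t1 + t * t2 := rfl
        refine ⟨by rw [hmm]; exact hnn, ?_⟩
        show x + (s • t1 + t • t2) • ve ∈ K i
        rw [hmm, hc]
        exact (hK i).1 h1.2 h2.2 hs ht hst
      have hAclosed : IsClosed A := by
        have hAeq : A = Ici (0:ℝ) ∩ (fun t : ℝ => x + t • ve) ⁻¹' (K i) :=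
          Set.ext fun t => Iff.rfl
        rw [hAeq]
        exact isClosed_Ici.inter ((hK i).2.1.isClosed.preimage (by fun_prop))
      obtain ⟨RK, hRK⟩ := (hK i).2.1.isBounded.subset_closedBall x
      have hAbdd : BddAbove A := by
        refine ⟨RK, fun t htA => ?_⟩
        have h1 : dist (x + t • ve) x ≤ RK := hRK htA.2
        rw [dist_eq_norm, add_sub_cancel_left, norm_smul, hve_norm, mul_one,
          Real.norm_eq_abs] at h1
        exact (le_abs_self t).trans h1
      set sm : ℝ := sSup A with hsmdef
      have hsmA : sm ∈ A := hAclosed.csSup_mem ⟨0, h0A⟩ hAbdd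
      have hsmnn : 0 ≤ sm := hsmA.1
      have hIcc : Icc (0:ℝ) sm ⊆ A := hAconv.ordConnected.out h0A hsmA
      have hout : ∀ t : ℝ, sm < t → t ≤ sm + δf i / 2 → x + t • ve ∈ W := by
        intro t hts htle
        have hnK : x + t • ve ∉ K i := by
          intro hmem
          exact absurd (le_csSup hAbdd ⟨by linarith, hmem⟩) (not_le.mpr hts)
        apply hδsafe i _ hnK
        have h1 : Metric.infDist (x + t • ve) (K i) ≤ dist (x + t • ve) (x + sm • ve) :=
          Metric.infDist_le_dist_of_mem hsmA.2
        have h2 : dist (x + t • ve) (x + sm • ve) = t - sm := by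
          rw [dist_eq_norm]
          have he2 : x + t • ve - (x + sm • ve) = (t - sm) • ve := by module
          rw [he2, norm_smul, hve_norm, mul_one, Real.norm_eq_abs,
            abs_of_pos (by linarith)]
        have := hδpos i
        linarith
      set x' : EucR d := x + (sm + δf i / 2) • ve with hx'def
      have hx'W : x' ∈ W := hout _ (by linarith [hδpos i]) (by linarith)
      refine ⟨x', hx'W, ?_, ?_⟩
      · refine ⟨i0, fun j hj => ?_⟩
        have hco : x' j = x j + (sm + δf i / 2) * (σ * (EuclideanSpace.single i0 (1:ℝ)) j) :=
          rfl
        rw [hco, EuclideanSpace.single_apply, if_neg hj]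
        ring
      · intro wp hwp
        rw [segment_eq_image'] at hwp
        obtain ⟨θ, hθ, rfl⟩ := hwp
        have hxx : x' - x = (sm + δf i / 2) • ve := add_sub_cancel_left x _
        set t : ℝ := θ * (sm + δf i / 2) with htdef
        have h0t : 0 ≤ t := mul_nonneg hθ.1 (by linarith [hδpos i])
        have hts : t ≤ sm + δf i / 2 := by
          have h1 : t ≤ 1 * (sm + δf i / 2) :=
            mul_le_mul_of_nonneg_right hθ.2 (by linarith [hδpos i])
          linarith
        have hpteq : x + θ • (x' - x) = x + t • ve := by
          rw [hxx, smul_smul, htdef]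
        show x + θ • (x' - x) ∈ S
        rw [hpteq]
        rcases le_or_gt t sm with hcase | hcase
        · have hmem : x + t • ve ∈ K i := (hIcc ⟨h0t, hcase⟩).2
          refine Set.mem_iInter.mpr fun j => ?_
          by_cases hji : j = i
          · subst hji
            intro hint
            rcases eq_or_lt_of_le h0t with h0 | h0
            · apply hxint
              have he0 : x + t • ve = x := by rw [← h0]; module
              rwa [he0] at hint
            · have hno := hσ t h0
              rw [← hveray t] at hno
              exact hno hint
          · intro hint
            exact (Set.disjoint_left.mp (hdisj (Ne.symm hji)) hmem) (interior_subset hint)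
        · exact hWS (hout t hcase hts)
    · refine ⟨x, hxU, ⟨i0, fun _ _ => rfl⟩, ?_⟩
      rw [segment_same]
      exact Set.singleton_subset_iff.mpr hx
  -- assemble
  intro x hx y hy
  obtain ⟨x', hx'W, hxseg, hxsub⟩ := exit x hx
  obtain ⟨y', hy'W, hyseg, hysub⟩ := exit y hy
  obtain ⟨nW, pW, hp0, hp1, hpath⟩ := hOC x' hx'W y' hy'W
  obtain ⟨r1, hr10, hr11, hr1path⟩ := orthPath_single hxseg hxsub
  have hpathS : IsOrthPathIn S pW nW := hpath.mono' hWS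
  obtain ⟨r2, hr20, hr21, hr2path⟩ := orthPath_concat hr1path hpathS (by rw [hr11, hp0])
  have hyseg' : IsOrthSeg y' y := by
    obtain ⟨i, hi⟩ := hyseg
    exact ⟨i, fun j hj => (hi j hj).symm⟩
  have hysub' : segment ℝ y' y ⊆ S := by rw [segment_symm]; exact hysub
  obtain ⟨r3, hr30, hr31, hr3path⟩ := orthPath_single hyseg' hysub'
  obtain ⟨r4, hr40, hr41, hr4path⟩ := orthPath_concat hr2path hr3path
    (by rw [hr21, hp1, hr30])
  exact ⟨1 + nW + 1, r4, by rw [hr40, hr20, hr10], by rw [hr41, hr31], hr4path⟩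
end

section
/- If S ⊆ ℝ² is staircase connected, then the complement of S has no bounded connected component. -/
open Set MeasureTheory Bornology
open scoped ENNReal

section Aux

lemma pt2_eq_self (z : EucR 2) : pt2 (z 0) (z 1) = z := by
  ext j; fin_cases j <;> rfl

lemma pt2_combo (c d s s' y : ℝ) (hcd : c + d = 1) :
    c • pt2 s y + d • pt2 s' y = pt2 (c*s+d*s') y := by
  ext j; fin_cases j
  · show c * s + d * s' = c*s+d*s'; ring
  · show c * y + d * y = y; linear_combination y * hcd

lemma pt2_continuous (y : ℝ) : Continuous fun t : ℝ => pt2 t y := by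
  unfold pt2
  refine (PiLp.continuous_toLp 2 (fun _ : Fin 2 => ℝ)).comp (continuous_pi fun i => ?_)
  fin_cases i
  · simpa using continuous_id'
  · simpa using continuous_const

lemma abs_le_norm_pt2 (t y : ℝ) : |t| ≤ ‖pt2 t y‖ := by
  rw [EuclideanSpace.norm_eq,
    show ∑ i, ‖pt2 t y i‖^2 = |t|^2 + |y|^2 by simp [Fin.sum_univ_two, pt2, sq_abs]]
  calc |t| = Real.sqrt (|t|^2) := by rw [Real.sqrt_sq (abs_nonneg t)]
  _ ≤ _ := Real.sqrt_le_sqrt (le_add_of_nonneg_right (sq_nonneg _))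

/-- pairwise nonneg products among nonzero terms + zero sum implies all terms zero -/
lemma all_zero_of_sum_zero (n : ℕ) (D : ℕ → ℝ)
    (hsum : ∑ k ∈ Finset.range n, D k = 0)
    (hpair : ∀ k < n, ∀ l < n, D k ≠ 0 → D l ≠ 0 → 0 ≤ D k * D l) :
    ∀ k < n, D k = 0 := by
  by_contra h
  push_neg at h
  obtain ⟨k0, hk0, hk0ne⟩ := h
  rcases lt_or_gt_of_ne hk0ne with hneg | hpos
  · have hall : ∀ l ∈ Finset.range n, D l ≤ 0 := by
      intro l hl
      rw [Finset.mem_range] at hl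
      by_cases hDl : D l = 0
      · exact le_of_eq hDl
      · nlinarith [hpair k0 hk0 l hl hk0ne hDl]
    have := (Finset.sum_eq_zero_iff_of_nonneg (fun l hl => neg_nonneg.2 (hall l hl))).1
      (by rw [Finset.sum_neg_distrib, hsum, neg_zero]) k0 (Finset.mem_range.2 hk0)
    exact hk0ne (by linarith [neg_eq_zero.1 this])
  · have hall : ∀ l ∈ Finset.range n, 0 ≤ D l := by
      intro l hl
      rw [Finset.mem_range] at hl
      by_cases hDl : D l = 0
      · exact ge_of_eq hDl
      · nlinarith [hpair k0 hk0 l hl hk0ne hDl]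
    exact hk0ne ((Finset.sum_eq_zero_iff_of_nonneg hall).1 hsum k0 (Finset.mem_range.2 hk0))

/-- discrete intermediate value -/
lemma exists_step (g : ℕ → ℝ) :
    ∀ n, ∀ t ∈ Set.uIcc (g 0) (g n),
      (∃ k < n, t ∈ Set.uIcc (g k) (g (k+1))) ∨ t = g 0 := by
  intro n
  induction n with
  | zero => intro t ht; right; simpa using ht
  | succ n ih =>
    intro t ht
    rcases uIcc_subset_uIcc_union_uIcc (b := g n) ht with h | h
    · rcases ih t h with ⟨k, hk, hmem⟩ | h
      · exact Or.inl ⟨k, hk.trans (Nat.lt_succ_self n), hmem⟩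
      · exact Or.inr h
    · exact Or.inl ⟨n, Nat.lt_succ_self n, h⟩

/-- Staircase connected sets contain the horizontal segment between any two of
their points at the same height. -/
lemma horiz_seg (S : Set (EucR 2)) (hS : StaircaseConnected S) (a b y : ℝ)
    (ha : pt2 a y ∈ S) (hb : pt2 b y ∈ S) :
    ∀ t ∈ Set.uIcc a b, pt2 t y ∈ S := by
  intro t ht
  obtain ⟨n, p, h0, hn, hpath, hsign⟩ := hS _ ha _ hb
  -- all vertical displacements vanish
  have hDsum : ∑ k ∈ Finset.range n, (p (k+1) 1 - p k 1) = 0 := by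
    rw [Finset.sum_range_sub (fun k => p k 1), h0, hn]
    show y - y = (0:ℝ)
    ring
  have hvert : ∀ k < n, p (k+1) 1 - p k 1 ≠ 0 → ∀ j, j ≠ (1 : Fin 2) → p k j = p (k+1) j := by
    intro k hk hne j hj
    obtain ⟨i, hi⟩ := (hpath k hk).1
    fin_cases i
    · exact absurd (hi 1 (by decide)) (fun h => hne (by rw [h]; ring))
    · exact hi j hj
  have hD0 : ∀ k < n, p (k+1) 1 - p k 1 = 0 := by
    refine all_zero_of_sum_zero n _ hDsum ?_
    intro k hk l hl hkne hlne
    exact hsign k hk l hl 1 (hvert k hk hkne) (hvert l hl hlne)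
  have hy : ∀ k, k ≤ n → p k 1 = y := by
    intro k hk
    induction k with
    | zero => rw [h0]; rfl
    | succ m ihm =>
      have hm : m < n := hk
      have := hD0 m hm
      have : p (m+1) 1 = p m 1 := by linarith
      rw [this]; exact ihm (le_of_lt hm)
  -- all edges are horizontal with consistent direction is not even needed;
  -- we only need each edge to be a horizontal segment at height y.
  have hpt : ∀ k, k ≤ n → p k = pt2 (p k 0) y := by
    intro k hk
    rw [← hy k hk]; exact (pt2_eq_self (p k)).symm
  have hg0 : p 0 0 = a := by rw [h0]; rfl
  have hgn : p n 0 = b := by rw [hn]; rfl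
  have ht' : t ∈ Set.uIcc ((fun k => p k 0) 0) ((fun k => p k 0) n) := by
    show t ∈ Set.uIcc (p 0 0) (p n 0)
    rw [hg0, hgn]; exact ht
  rcases exists_step (fun k => p k 0) n t ht' with ⟨k, hk, hmem⟩ | heq
  · -- t lies over edge k
    have hseg : t ∈ segment ℝ (p k 0) (p (k+1) 0) := by
      rw [segment_eq_uIcc]; exact hmem
    obtain ⟨c, d, hc, hd, hcd, hrep⟩ := hseg
    have : pt2 t y ∈ segment ℝ (p k) (p (k+1)) := by
      refine ⟨c, d, hc, hd, hcd, ?_⟩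
      simp only [smul_eq_mul] at hrep
      rw [hpt k (le_of_lt hk), hpt (k+1) hk, pt2_combo c d _ _ y hcd, hrep]
    exact (hpath k hk).2 this
  · rw [heq, hg0]; exact ha

/-- A set containing points `pt2 t y` with `|t|` arbitrarily large is unbounded. -/
lemma unbounded_of_pt2 (R : Set (EucR 2)) (y : ℝ)
    (h : ∀ c : ℝ, ∃ t, c ≤ |t| ∧ pt2 t y ∈ R) : ¬ Bornology.IsBounded R := by
  intro hbdd
  obtain ⟨C, hC⟩ := isBounded_iff_forall_norm_le.1 hbdd
  obtain ⟨t, ht, htR⟩ := h (C + 1)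
  have := (hC _ htR)
  have := abs_le_norm_pt2 t y
  linarith

end Aux

/-- If `S ⊆ ℝ²` is staircase connected, then `Sᶜ` has no bounded connected
component. -/
theorem compl_no_bounded_component (S : Set (EucR 2)) (hS : StaircaseConnected S) :
    ∀ x ∈ Sᶜ, ¬ IsBounded (connectedComponentIn Sᶜ x) := by
  intro x hx hbdd
  by_cases hA : ∃ s, s < x 0 ∧ pt2 s (x 1) ∈ S
  · by_cases hB : ∃ s, x 0 < s ∧ pt2 s (x 1) ∈ S
    · -- S has a point on both sides of x on the horizontal line: contradiction
      obtain ⟨s, hs, hsS⟩ := hA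
      obtain ⟨s', hs', hs'S⟩ := hB
      have hmem : x 0 ∈ Set.uIcc s s' := by
        rw [Set.uIcc_of_le (by linarith)]
        exact ⟨le_of_lt hs, le_of_lt hs'⟩
      have := horiz_seg S hS s s' (x 1) hsS hs'S (x 0) hmem
      rw [pt2_eq_self x] at this
      exact hx this
    · -- right ray through x lies in Sᶜ
      push_neg at hB
      set R : Set (EucR 2) := (fun t => pt2 t (x 1)) '' Set.Ici (x 0) with hR
      have hRsub : R ⊆ Sᶜ := by
        rintro _ ⟨t, ht, rfl⟩ hmem
        have hmem' : pt2 t (x 1) ∈ S := hmem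
        rcases eq_or_lt_of_le (show x 0 ≤ t from ht) with h | h
        · rw [← h, pt2_eq_self x] at hmem'; exact hx hmem'
        · exact absurd hmem' (hB t h)
      have hxR : x ∈ R := ⟨x 0, Set.self_mem_Ici, pt2_eq_self x⟩
      have hRconn : IsPreconnected R :=
        isPreconnected_Ici.image _ (pt2_continuous (x 1)).continuousOn
      have hsub := hRconn.subset_connectedComponentIn hxR hRsub
      refine unbounded_of_pt2 _ (x 1) ?_ (hbdd.subset hsub)
      intro c
      refine ⟨max (x 0) (|c|), le_trans (le_abs_self c) ?_, ⟨_, Set.mem_Ici.2 (le_max_left _ _), rfl⟩⟩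
      exact le_trans (le_max_right _ _) (le_abs_self _)
  · -- left ray through x lies in Sᶜ
    push_neg at hA
    set R : Set (EucR 2) := (fun t => pt2 t (x 1)) '' Set.Iic (x 0) with hR
    have hRsub : R ⊆ Sᶜ := by
      rintro _ ⟨t, ht, rfl⟩ hmem
      have hmem' : pt2 t (x 1) ∈ S := hmem
      rcases eq_or_lt_of_le (show t ≤ x 0 from ht) with h | h
      · rw [h, pt2_eq_self x] at hmem'; exact hx hmem'
      · exact absurd hmem' (hA t h)
    have hxR : x ∈ R := ⟨x 0, Set.self_mem_Iic, pt2_eq_self x⟩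
    have hRconn : IsPreconnected R :=
      isPreconnected_Iic.image _ (pt2_continuous (x 1)).continuousOn
    have hsub := hRconn.subset_connectedComponentIn hxR hRsub
    refine unbounded_of_pt2 _ (x 1) ?_ (hbdd.subset hsub)
    intro c
    refine ⟨min (x 0) (-|c|), ?_, ⟨_, Set.mem_Iic.2 (min_le_left _ _), rfl⟩⟩
    have h1 : min (x 0) (-|c|) ≤ -|c| := min_le_right _ _
    have h2 : |min (x 0) (-|c|)| = -min (x 0) (-|c|) :=
      abs_of_nonpos (by linarith [abs_nonneg c])
    rw [h2]
    linarith [le_abs_self c]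
end
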